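/- Let σ ⊆ ℚⁿ be a pointed polyhedral cone with dual cone σ∨, and let P = Q + σ∨ where Q is a polytope whose vertices lie in ℤⁿ. Define S_P = {(m, e) ∈ ℤⁿ × ℕ : m ∈ eP}. Then S_P is a saturated subsemigroup of ℤⁿ × ℤ, i.e., if s ∈ ℤ_{>0} and (m,e) ∈ ℤⁿ × ℤ satisfy s·(m,e) ∈ S_P, then (m,e) ∈ S_P (where 0·P is interpreted as σ∨). -/

import Mathlib

open scoped Pointwise
open Finset

namespace Paper

/-- Standard pairing on `ℚⁿ`. -/
def dot {n : ℕ} (m v : Fin n → ℚ) : ℚ := ∑ i, m i * v i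

/-- Dual cone `σ∨ = {m | ∀ v ∈ σ, ⟨m,v⟩ ≥ 0}`. -/
def dualCone {n : ℕ} (σ : Set (Fin n → ℚ)) : Set (Fin n → ℚ) :=
  {m | ∀ v ∈ σ, 0 ≤ dot m v}

/-- A polyhedral cone: the cone generated by finitely many vectors. -/
def IsPolyhedralCone {n : ℕ} (σ : Set (Fin n → ℚ)) : Prop :=
  ∃ (k : ℕ) (g : Fin k → Fin n → ℚ),
    σ = {v | ∃ c : Fin k → ℚ, (∀ i, 0 ≤ c i) ∧ v = ∑ i, c i • g i}

/-- A pointed (strongly convex) cone contains no line. -/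
def Pointed {n : ℕ} (σ : Set (Fin n → ℚ)) : Prop := ∀ v ∈ σ, -v ∈ σ → v = 0

/-- The canonical embedding `ℤⁿ → ℚⁿ`. -/
def Lq {n : ℕ} (m : Fin n → ℤ) : Fin n → ℚ := fun i => (m i : ℚ)

/-- A rational vector is a lattice point if all coordinates are integers. -/
def IsLatticePt {n : ℕ} (v : Fin n → ℚ) : Prop := ∀ i, ∃ z : ℤ, v i = (z : ℚ)

/-- A `σ`-polyhedron: Minkowski sum of a (nonempty) polytope with the cone `σ`. -/
def IsSigmaPolyhedron {n : ℕ} (σ Δ : Set (Fin n → ℚ)) : Prop :=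
  ∃ F : Finset (Fin n → ℚ), F.Nonempty ∧ Δ = convexHull ℚ (↑F : Set (Fin n → ℚ)) + σ

/-- An integral `σv`-polyhedron: Minkowski sum of a lattice polytope with `σv`. -/
def IsIntegralPoly {n : ℕ} (σv P : Set (Fin n → ℚ)) : Prop :=
  ∃ F : Finset (Fin n → ℤ), F.Nonempty ∧ P = convexHull ℚ (Lq '' (↑F : Set (Fin n → ℤ))) + σv

/-- The `e`-fold Minkowski sum `eP` of `P`, with the convention `0P = σv`. -/
def mink {n : ℕ} (σv P : Set (Fin n → ℚ)) : ℕ → Set (Fin n → ℚ)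
  | 0 => σv
  | 1 => P
  | (e + 2) => mink σv P (e + 1) + P

/-- The semigroup `σ∨ ∩ ℤⁿ` of lattice points of the dual cone. -/
def latticeDual {n : ℕ} (σ : Set (Fin n → ℚ)) : AddSubmonoid (Fin n → ℤ) where
  carrier := {m | Lq m ∈ dualCone σ}
  zero_mem' := by
    intro v hv
    simp [dot, Lq]
  add_mem' := by
    intro a b ha hb v hv
    have h1 := ha v hv
    have h2 := hb v hv
    have h : dot (Lq (a + b)) v = dot (Lq a) v + dot (Lq b) v := by
      simp only [dot, Lq, Pi.add_apply]
      rw [← Finset.sum_add_distrib]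
      apply Finset.sum_congr rfl
      intro i _
      push_cast
      ring
    rw [Set.mem_setOf_eq] at *
    simpa [dualCone, h] using add_nonneg h1 h2

/-- The monomial `χ^m` in the semigroup algebra `k[σ∨ ∩ ℤⁿ]`. -/
noncomputable def mono (k : Type*) [CommRing k] {n : ℕ} (σ : Set (Fin n → ℚ))
    (m : latticeDual σ) : AddMonoidAlgebra k (latticeDual σ) :=
  AddMonoidAlgebra.single m 1

/-- The monomial ideal `I[P]` generated by the monomials `χ^m`, `m ∈ P ∩ ℤⁿ`. -/
noncomputable def idealOf (k : Type*) [CommRing k] {n : ℕ} (σ : Set (Fin n → ℚ))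
    (P : Set (Fin n → ℚ)) : Ideal (AddMonoidAlgebra k (latticeDual σ)) :=
  Ideal.span {f | ∃ m : latticeDual σ, Lq (m : Fin n → ℤ) ∈ P ∧ f = mono k σ m}

/-- `a` satisfies an equation of integral dependence over the ideal `I`:
`a^r + λ₁ a^(r-1) + ⋯ + λ_r = 0` with `λᵢ ∈ Iⁱ`. -/
def IntegralOverIdeal {A : Type*} [CommRing A] (I : Ideal A) (a : A) : Prop :=
  ∃ r : ℕ, 0 < r ∧ ∃ c : ℕ → A, (∀ i ∈ Finset.Icc 1 r, c i ∈ I ^ i) ∧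
    a ^ r + ∑ i ∈ Finset.Icc 1 r, c i * a ^ (r - i) = 0

/-- A monomial (torus-homogeneous) ideal of `k[σ∨ ∩ ℤⁿ]`. -/
def IsMonomialIdeal (k : Type*) [CommRing k] {n : ℕ} (σ : Set (Fin n → ℚ))
    (I : Ideal (AddMonoidAlgebra k (latticeDual σ))) : Prop :=
  ∃ S : Set (latticeDual σ), I = Ideal.span {f | ∃ m ∈ S, f = mono k σ m}

/-- The semigroup `S_P = {(m,e) : m ∈ eP ∩ ℤⁿ}` (with `0P = σ∨`), viewed inside `ℤⁿ × ℤ`. -/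
def SP {n : ℕ} (σ P : Set (Fin n → ℚ)) : Set ((Fin n → ℤ) × ℤ) :=
  {p | 0 ≤ p.2 ∧ Lq p.1 ∈ mink (dualCone σ) P p.2.toNat}

section Aux
variable {n : ℕ}

lemma dual_zero (σ : Set (Fin n → ℚ)) : (0 : Fin n → ℚ) ∈ dualCone σ := by
  intro v hv; simp [dot]

lemma dual_add {σ : Set (Fin n → ℚ)} {a b : Fin n → ℚ} (ha : a ∈ dualCone σ)
    (hb : b ∈ dualCone σ) : a + b ∈ dualCone σ := by
  intro v hv
  have h : dot (a + b) v = dot a v + dot b v := by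
    simp [dot, add_mul, Finset.sum_add_distrib]
  rw [h]; exact add_nonneg (ha v hv) (hb v hv)

lemma dual_smul {σ : Set (Fin n → ℚ)} {c : ℚ} (hc : 0 ≤ c) {a : Fin n → ℚ}
    (ha : a ∈ dualCone σ) : c • a ∈ dualCone σ := by
  intro v hv
  have h : dot (c • a) v = c * dot a v := by
    simp [dot, Finset.mul_sum, mul_assoc]
  rw [h]; exact mul_nonneg hc (ha v hv)

lemma dual_add_self (σ : Set (Fin n → ℚ)) : dualCone σ + dualCone σ = dualCone σ := by
  apply Set.Subset.antisymm
  · rintro x ⟨a, ha, b, hb, rfl⟩; exact dual_add ha hb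
  · intro x hx; exact ⟨x, hx, 0, dual_zero σ, by simp⟩

lemma mink_eq {σ C P : Set (Fin n → ℚ)} (hC : Convex ℚ C)
    (hP : P = C + dualCone σ) :
    ∀ e : ℕ, e ≠ 0 → mink (dualCone σ) P e = ((e : ℕ) : ℚ) • C + dualCone σ := by
  intro e
  induction e with
  | zero => intro h; exact absurd rfl h
  | succ e ih =>
    intro _
    match e, ih with
    | 0, _ => simpa [mink, one_smul] using hP
    | (e+1), ih =>
      have h1 : mink (dualCone σ) P (e + 1 + 1) = mink (dualCone σ) P (e + 1) + P := rfl
      rw [h1, ih (by omega), hP]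
      have hsm : ((e+1+1 : ℕ) : ℚ) • C = ((e+1 : ℕ) : ℚ) • C + (1 : ℚ) • C := by
        rw [← hC.add_smul (by positivity) (by norm_num)]
        norm_num
      rw [hsm, one_smul, add_add_add_comm, dual_add_self σ]

end Aux

section Aux2
variable {n : ℕ}

lemma Lq_add (a b : Fin n → ℤ) : Lq (a + b) = Lq a + Lq b := by
  funext i; simp [Lq]

lemma Lq_smul (s : ℤ) (a : Fin n → ℤ) : Lq (s • a) = (s : ℚ) • Lq a := by
  funext i; simp [Lq]

lemma mink_mem_add {σ C P : Set (Fin n → ℚ)} (hC : Convex ℚ C)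
    (hP : P = C + dualCone σ) {a b : Fin n → ℚ} {e1 e2 : ℕ}
    (ha : a ∈ mink (dualCone σ) P e1) (hb : b ∈ mink (dualCone σ) P e2) :
    a + b ∈ mink (dualCone σ) P (e1 + e2) := by
  rcases Nat.eq_zero_or_pos e1 with h1 | h1
  · subst h1
    rcases Nat.eq_zero_or_pos e2 with h2 | h2
    · subst h2; exact dual_add ha hb
    · rw [mink_eq hC hP e2 (by omega)] at hb
      rw [show 0 + e2 = e2 from by omega, mink_eq hC hP e2 (by omega)]
      obtain ⟨c, hc, v, hv, rfl⟩ := hb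
      exact ⟨c, hc, a + v, dual_add ha hv, by simp only []; abel⟩
  · rcases Nat.eq_zero_or_pos e2 with h2 | h2
    · subst h2
      rw [mink_eq hC hP e1 (by omega)] at ha
      rw [show e1 + 0 = e1 from by omega, mink_eq hC hP e1 (by omega)]
      obtain ⟨c, hc, v, hv, rfl⟩ := ha
      exact ⟨c, hc, v + b, dual_add hv hb, by simp only []; abel⟩
    · rw [mink_eq hC hP e1 (by omega)] at ha
      rw [mink_eq hC hP e2 (by omega)] at hb
      rw [mink_eq hC hP (e1 + e2) (by omega)]
      obtain ⟨c1, hc1, v1, hv1, rfl⟩ := ha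
      obtain ⟨c2, hc2, v2, hv2, rfl⟩ := hb
      have hsm : ((e1 + e2 : ℕ) : ℚ) • C = ((e1 : ℕ) : ℚ) • C + ((e2 : ℕ) : ℚ) • C := by
        rw [← hC.add_smul (by positivity) (by positivity)]; push_cast; ring_nf
      rw [hsm]
      exact ⟨c1 + c2, Set.add_mem_add hc1 hc2, v1 + v2, dual_add hv1 hv2, by simp only []; abel⟩

end Aux2

theorem statement2' {n : ℕ} (σ : Set (Fin n → ℚ))
    (P : Set (Fin n → ℚ)) (hP : ∃ F : Finset (Fin n → ℤ), F.Nonempty ∧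
      P = convexHull ℚ (Lq '' (↑F : Set (Fin n → ℤ))) + dualCone σ) :
    (∀ p q : (Fin n → ℤ) × ℤ,
      (0 ≤ p.2 ∧ Lq p.1 ∈ mink (dualCone σ) P p.2.toNat) →
      (0 ≤ q.2 ∧ Lq q.1 ∈ mink (dualCone σ) P q.2.toNat) →
      (0 ≤ (p+q).2 ∧ Lq (p+q).1 ∈ mink (dualCone σ) P (p+q).2.toNat)) ∧
    (∀ s : ℤ, 0 < s → ∀ p : (Fin n → ℤ) × ℤ,
      (0 ≤ (s • p).2 ∧ Lq (s • p).1 ∈ mink (dualCone σ) P (s • p).2.toNat) →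
      (0 ≤ p.2 ∧ Lq p.1 ∈ mink (dualCone σ) P p.2.toNat)) := by
  obtain ⟨F, hFne, hPe⟩ := hP
  have hC : Convex ℚ (convexHull ℚ (Lq '' (↑F : Set (Fin n → ℤ)))) := convex_convexHull ℚ _
  constructor
  · rintro p q ⟨hp2, hp⟩ ⟨hq2, hq⟩
    refine ⟨add_nonneg hp2 hq2, ?_⟩
    have ht : (p + q).2.toNat = p.2.toNat + q.2.toNat := by
      simp only [Prod.snd_add]; exact Int.toNat_add hp2 hq2
    rw [ht, Prod.fst_add, Lq_add]
    exact mink_mem_add hC hPe hp hq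
  · intro s hs p hsp
    obtain ⟨h1, h2⟩ := hsp
    simp only [Prod.smul_snd, Prod.smul_fst, smul_eq_mul] at h1 h2
    have hp2 : 0 ≤ p.2 := nonneg_of_mul_nonneg_right h1 hs
    refine ⟨hp2, ?_⟩
    have hsQ : (0 : ℚ) < (s : ℚ) := by exact_mod_cast hs
    have hsne : (s : ℚ) ≠ 0 := ne_of_gt hsQ
    have hLq : Lq (s • p.1) = (s : ℚ) • Lq p.1 := Lq_smul s p.1
    rcases Nat.eq_zero_or_pos p.2.toNat with h0 | hpos
    · have hp0 : p.2 = 0 := by omega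
      rw [h0]
      have h20 : (s * p.2).toNat = 0 := by rw [hp0]; simp
      rw [h20] at h2
      have : Lq p.1 = (s : ℚ)⁻¹ • Lq (s • p.1) := by
        rw [hLq, smul_smul, inv_mul_cancel₀ hsne, one_smul]
      rw [this]
      exact dual_smul (by positivity) h2
    · have hN : (s * p.2).toNat ≠ 0 := by
        have : 0 < p.2 := by omega
        have : 0 < s * p.2 := mul_pos hs this
        omega
      rw [mink_eq hC hPe _ hN] at h2
      obtain ⟨c', hc', v, hv, heq⟩ := h2
      obtain ⟨c, hc, rfl⟩ := hc'
      have hcast : (((s * p.2).toNat : ℕ) : ℚ) = (s : ℚ) * ((p.2.toNat : ℕ) : ℚ) := by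
        have e1 : ((s * p.2).toNat : ℤ) = s * p.2 := Int.toNat_of_nonneg h1
        have e2 : ((p.2.toNat : ℕ) : ℤ) = p.2 := Int.toNat_of_nonneg hp2
        have hZ : ((s * p.2).toNat : ℤ) = s * (p.2.toNat : ℤ) := by rw [e1, e2]
        exact_mod_cast hZ
      have key : Lq p.1 = ((p.2.toNat : ℕ) : ℚ) • c + (s : ℚ)⁻¹ • v := by
        have : (s : ℚ) • Lq p.1 = (((s * p.2).toNat : ℕ) : ℚ) • c + v := by
          rw [← hLq, ← heq]
        apply smul_right_injective (Fin n → ℚ) hsne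
        show (s:ℚ) • Lq p.1 = (s:ℚ) • (((p.2.toNat : ℕ) : ℚ) • c + (s : ℚ)⁻¹ • v)
        rw [this, smul_add, smul_smul, smul_smul, mul_inv_cancel₀ hsne, one_smul, hcast]
      rw [mink_eq hC hPe _ (by omega), key]
      exact ⟨_, Set.smul_mem_smul_set hc, _, dual_smul (by positivity) hv, rfl⟩


/-- for an integral `σ∨`-polyhedron `P`, the set
`S_P = {(m,e) | m ∈ eP ∩ ℤⁿ}` is a subsemigroup of `ℤⁿ × ℤ`, and it is saturated:
`s • (m,e) ∈ S_P` for some `s > 0` implies `(m,e) ∈ S_P`. -/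
theorem statement2 {n : ℕ} (σ : Set (Fin n → ℚ))
    (hσ : IsPolyhedralCone σ) (hσp : Pointed σ)
    (P : Set (Fin n → ℚ)) (hP : IsIntegralPoly (dualCone σ) P) :
    (∀ p q : (Fin n → ℤ) × ℤ, p ∈ SP σ P → q ∈ SP σ P → p + q ∈ SP σ P) ∧
    (∀ s : ℤ, 0 < s → ∀ p : (Fin n → ℤ) × ℤ, s • p ∈ SP σ P → p ∈ SP σ P) :=
  statement2' σ P hP

end Paper
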